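/- arXiv:1703.10505 — 3 statements merged into one kernel-verified Lean document; each statement's English description precedes it below -/
import Mathlib

section
/- Let V be a locally compact Hausdorff space and let A be a closed *-subalgebra of C₀(V, K(H)) (where H = ℓ²(ℤ, ℂ)) such that C₀(V, 𝒟) ⊆ A. For every a ∈ A and all i, j ∈ ℤ, the function n_{ij} : V → K(H) defined by n_{ij}(p) = P_i a(p) P_j belongs to A, and for every b ∈ C₀(V, 𝒟) one has n_{ij} b (n_{ij})* ∈ C₀(V, 𝒟) and (n_{ij})* b n_{ij} ∈ C₀(V, 𝒟); that is, each n_{ij} lies in the normalizer N_A(C₀(V, 𝒟)). -/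
set_option maxHeartbeats 1000000
set_option synthInstance.maxHeartbeats 400000

open scoped ZeroAtInfty

noncomputable section

/-- The Hilbert space `H = ℓ²(ℤ, ℂ)`. -/
abbrev Hsp : Type := lp (fun _ : ℤ => ℂ) 2

/-- The bounded linear operators on `H = ℓ²(ℤ, ℂ)`. -/
abbrev Op : Type := Hsp →L[ℂ] Hsp

/-- The standard orthonormal basis `(e i)_{i ∈ ℤ}` of `ℓ²(ℤ, ℂ)`. -/
def e (i : ℤ) : Hsp := lp.single 2 i (1 : ℂ)

/-- The set `𝒟` of diagonal compact operators on `ℓ²(ℤ, ℂ)`: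
compact operators `T` with `T eᵢ ∈ ℂ eᵢ` for all `i`. -/
def Dset : Set Op := {T | IsCompactOperator T ∧ ∀ i : ℤ, ∃ c : ℂ, T (e i) = c • e i}

variable (M : Type) [TopologicalSpace M]

/-- The subset of `C₀(M, B(H))` consisting of compact-operator valued functions;
this is `C₀(M, K(H))`. -/
def CK : Set C₀(M, Op) := {a | ∀ p : M, IsCompactOperator (a p)}

/-- The subset of `C₀(M, B(H))` consisting of diagonal compact-operator valued functions;
this is `C₀(M, 𝒟)`. -/
def CD : Set C₀(M, Op) := {b | ∀ p : M, b p ∈ Dset}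

/-- Positivity of an element of `C₀(M, B(H))`: all of its values are positive operators. -/
def IsPos (u : C₀(M, Op)) : Prop := ∀ p : M, (u p).IsPositive

/-- `B` is a Cartan subalgebra of `A` (both viewed as subsets of the ambient C*-algebra
`C₀(M, B(H))`): `B` is a closed *-subalgebra of `A` which is (i) commutative, (ii) contains an
approximate unit of `A`, (iii) is maximal abelian in `A`, (iv) is regular in `A` (the smallest
closed *-subalgebra of `A` containing the normalizer `N_A(B)` is `A` itself), and (v) is the
image of a faithful conditional expectation defined on `A`. -/
def IsCartanSubalgebraIn (A B : Set C₀(M, Op)) : Prop :=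
  B ⊆ A ∧ IsClosed B ∧ (0 : C₀(M, Op)) ∈ B ∧
  (∀ x ∈ B, ∀ y ∈ B, x + y ∈ B) ∧
  (∀ (c : ℂ), ∀ x ∈ B, c • x ∈ B) ∧
  (∀ x ∈ B, ∀ y ∈ B, x * y ∈ B) ∧
  (∀ x ∈ B, star x ∈ B) ∧
  -- (i) commutative
  (∀ x ∈ B, ∀ y ∈ B, x * y = y * x) ∧
  -- (ii) contains an approximate unit of `A`
  (∀ F : Finset C₀(M, Op), ↑F ⊆ A → ∀ ε : ℝ, 0 < ε →
    ∃ u ∈ B, IsPos M u ∧ ‖u‖ ≤ 1 ∧ ∀ a ∈ F, ‖u * a - a‖ < ε ∧ ‖a * u - a‖ < ε) ∧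
  -- (iii) maximal abelian in `A`
  (∀ a ∈ A, (∀ b ∈ B, a * b = b * a) → a ∈ B) ∧
  -- (iv) regular in `A`
  closure (↑(NonUnitalStarAlgebra.adjoin ℂ
      {n : C₀(M, Op) | n ∈ A ∧ (∀ b ∈ B, n * b * star n ∈ B) ∧ ∀ b ∈ B, star n * b * n ∈ B}) :
      Set C₀(M, Op)) = A ∧
  -- (v) faithful conditional expectation from `A` onto `B`
  ∃ E : C₀(M, Op) → C₀(M, Op),
    (∀ a ∈ A, ∀ a' ∈ A, E (a + a') = E a + E a') ∧
    (∀ (c : ℂ), ∀ a ∈ A, E (c • a) = c • E a) ∧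
    ContinuousOn E A ∧
    (∀ a ∈ A, ‖E a‖ ≤ ‖a‖) ∧
    (∀ a ∈ A, E a ∈ B) ∧
    (∀ b ∈ B, E b = b) ∧
    (∀ a ∈ A, IsPos M a → IsPos M (E a)) ∧
    (∀ a ∈ A, E (star a * a) = 0 → a = 0)



/-- The rank-one orthogonal projection of `ℓ²(ℤ, ℂ)` onto `ℂ eᵢ`. -/
def Pproj (i : ℤ) : Op := (innerSL ℂ (e i)).smulRight (e i)


lemma Pproj_apply (i : ℤ) (x : Hsp) : Pproj i x = (inner ℂ (e i) x : ℂ) • e i := rfl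

lemma inner_e (i k : ℤ) : (inner ℂ (e i) (e k) : ℂ) = if i = k then 1 else 0 := by
  classical
  rw [e, e, lp.inner_single_left]
  simp [lp.single_apply, RCLike.inner_apply, eq_comm, Pi.single_apply]

lemma Pproj_e_self (i : ℤ) : Pproj i (e i) = e i := by
  rw [Pproj_apply, inner_e, if_pos rfl, one_smul]

lemma Pproj_e_ne (i k : ℤ) (h : k ≠ i) : Pproj i (e k) = 0 := by
  simp [Pproj_apply, inner_e, (Ne.symm h)]

lemma isCompactOperator_Pproj (i : ℤ) : IsCompactOperator (Pproj i) := by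
  refine ⟨(fun c : ℂ => c • e i) '' Metric.closedBall 0 ‖e i‖,
    (isCompact_closedBall _ _).image (by continuity), ?_⟩
  refine Filter.mem_of_superset (Metric.closedBall_mem_nhds (0 : Hsp) one_pos) ?_
  intro x hx
  rw [Metric.mem_closedBall, dist_zero_right] at hx
  refine ⟨inner ℂ (e i) x, ?_, rfl⟩
  rw [Metric.mem_closedBall, dist_zero_right]
  calc ‖(inner ℂ (e i) x : ℂ)‖ ≤ ‖e i‖ * ‖x‖ := norm_inner_le_norm _ _
    _ ≤ ‖e i‖ * 1 := by gcongr
    _ = ‖e i‖ := mul_one _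

lemma star_Pproj (i : ℤ) : star (Pproj i) = Pproj i := by
  rw [ContinuousLinearMap.star_eq_adjoint, eq_comm, ContinuousLinearMap.eq_adjoint_iff]
  intro x y
  simp only [Pproj_apply, inner_smul_left, inner_smul_right, inner_conj_symm]
  ring

lemma sandwich_mem_Dset (i : ℤ) (S : Op) : Pproj i * S * Pproj i ∈ Dset := by
  have hco : Pproj i * S * Pproj i = Pproj i ∘L (S ∘L Pproj i) := mul_assoc _ _ _
  constructor
  · rw [hco]
    exact (isCompactOperator_Pproj i).comp_clm (S ∘L Pproj i)
  · intro k
    by_cases h : k = i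
    · subst h
      exact ⟨inner ℂ (e k) (S (Pproj k (e k))), by rw [hco]; rfl⟩
    · refine ⟨0, ?_⟩
      rw [hco]
      simp [ContinuousLinearMap.comp_apply, Pproj_e_ne i k h]

lemma smul_Pproj_mem_Dset (c : ℂ) (i : ℤ) : c • Pproj i ∈ Dset := by
  refine ⟨(isCompactOperator_Pproj i).smul c, fun k => ?_⟩
  by_cases h : k = i
  · subst h
    exact ⟨c, by simp [Pproj_e_self]⟩
  · exact ⟨0, by simp [Pproj_e_ne i k h]⟩

/-- Let `V` be a locally compact Hausdorff space and `A` a closed *-subalgebra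
of `C₀(V, K(H))` containing `C₀(V, 𝒟)`. For every `a ∈ A` and `i, j ∈ ℤ`, the function
`n_{ij} : p ↦ Pᵢ a(p) Pⱼ` belongs to `A` and normalizes `C₀(V, 𝒟)`; that is,
`n_{ij} ∈ N_A(C₀(V, 𝒟))`. -/
theorem compress_mem_normalizer
    (V : Type) [TopologicalSpace V] [LocallyCompactSpace V] [T2Space V]
    (A : Set C₀(V, Op))
    (hAK : A ⊆ CK V)
    (hAclosed : IsClosed A)
    (hA0 : (0 : C₀(V, Op)) ∈ A)
    (hAadd : ∀ x ∈ A, ∀ y ∈ A, x + y ∈ A)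
    (hAsmul : ∀ (c : ℂ), ∀ x ∈ A, c • x ∈ A)
    (hAmul : ∀ x ∈ A, ∀ y ∈ A, x * y ∈ A)
    (hAstar : ∀ x ∈ A, star x ∈ A)
    (hD : CD V ⊆ A)
    (a : C₀(V, Op)) (ha : a ∈ A) (i j : ℤ) :
    ∃ n : C₀(V, Op),
      (∀ p : V, n p = Pproj i ∘L a p ∘L Pproj j) ∧
      n ∈ A ∧
      (∀ b ∈ CD V, n * b * star n ∈ CD V) ∧
      (∀ b ∈ CD V, star n * b * n ∈ CD V) := by
  classical
  -- The compression map `T ↦ Pᵢ ∘L T ∘L Pⱼ` as a continuous linear map on `Op`.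
  let L : Op →L[ℂ] Op :=
    (ContinuousLinearMap.compL ℂ Hsp Hsp Hsp (Pproj i)).comp
      ((ContinuousLinearMap.compL ℂ Hsp Hsp Hsp).flip (Pproj j))
  have hLapp : ∀ T : Op, L T = Pproj i ∘L T ∘L Pproj j := by
    intro T
    simp [L, ContinuousLinearMap.compL_apply]
  -- The function `n`.
  let n : C₀(V, Op) :=
    { toFun := fun p => Pproj i ∘L a p ∘L Pproj j
      continuous_toFun := by
        have : Continuous fun p => L (a p) := L.continuous.comp (map_continuous a)
        simpa only [hLapp] using this
      zero_at_infty' := by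
        have h0 : Filter.Tendsto a (Filter.cocompact V) (nhds 0) := zero_at_infty a
        have := (L.continuous.tendsto 0).comp h0
        simpa only [Function.comp_def, hLapp, ContinuousLinearMap.comp_zero,
          ContinuousLinearMap.zero_comp] using this }
  have hnapp : ∀ p : V, n p = Pproj i ∘L a p ∘L Pproj j := fun p => rfl
  have hnmul : ∀ p : V, n p = Pproj i * a p * Pproj j := by
    intro p
    rw [hnapp p]
    exact (mul_assoc _ _ _).symm
  -- membership in `A` via approximation
  have hnA : n ∈ A := by
    rw [← hAclosed.closure_eq, Metric.mem_closure_iff]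
    intro ε hε
    have hε2 : (0:ℝ) < ε / 2 := by positivity
    have hno : {p : V | ‖n p‖ < ε / 2} ∈ Filter.cocompact V := by
      have := Metric.tendsto_nhds.mp (zero_at_infty (f := n)) (ε / 2) hε2
      simp only [dist_zero_right] at this
      exact this
    obtain ⟨K, hK, hKsub⟩ := Filter.mem_cocompact.mp hno
    obtain ⟨f, hf1, -, hfc, hficc⟩ :=
      exists_continuous_one_zero_of_isCompact hK isClosed_empty (Set.disjoint_empty K)
    -- diagonal cutoffs
    let d : ℤ → C₀(V, Op) := fun t =>
      { toFun := fun p => (f p : ℂ) • Pproj t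
        continuous_toFun :=
          ((Complex.continuous_ofReal.comp (map_continuous f)).smul continuous_const)
        zero_at_infty' := by
          have hev : (fun p => (f p : ℂ) • Pproj t) =ᶠ[Filter.cocompact V] 0 := by
            refine Filter.mem_of_superset
              (Filter.mem_cocompact.mpr ⟨tsupport f, hfc, subset_rfl⟩) ?_
            intro p hp
            have : f p = 0 := image_eq_zero_of_notMem_tsupport hp
            show ((f p : ℂ)) • Pproj t = 0
            rw [this, Complex.ofReal_zero, zero_smul]
          exact Filter.Tendsto.congr' hev.symm tendsto_const_nhds }
    have hdapp : ∀ t p, d t p = (f p : ℂ) • Pproj t := fun t p => rfl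
    have hdCD : ∀ t : ℤ, d t ∈ CD V := by
      intro t p
      rw [hdapp]
      exact smul_Pproj_mem_Dset _ t
    have hmA : d i * a * d j ∈ A :=
      hAmul _ (hAmul _ (hD (hdCD i)) a ha) _ (hD (hdCD j))
    refine ⟨d i * a * d j, hmA, ?_⟩
    have hmp : ∀ p : V, (d i * a * d j) p = ((f p : ℂ) ^ 2) • n p := by
      intro p
      rw [ZeroAtInftyContinuousMap.mul_apply, ZeroAtInftyContinuousMap.mul_apply,
        hdapp, hdapp, hnapp]
      ext x : 1
      simp only [ContinuousLinearMap.mul_apply, ContinuousLinearMap.comp_apply,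
        ContinuousLinearMap.smul_apply, map_smul, smul_smul, sq]
    have hbound : ∀ p : V, ‖n p - (d i * a * d j) p‖ ≤ ε / 2 := by
      intro p
      rw [hmp p]
      have hfact : n p - ((f p : ℂ) ^ 2) • n p = ((1 : ℂ) - (f p : ℂ) ^ 2) • n p := by
        rw [sub_smul, one_smul]
      rw [hfact, norm_smul ((1 : ℂ) - (f p : ℂ) ^ 2) (n p)]
      by_cases hp : p ∈ K
      · have : f p = 1 := hf1 hp
        simp [this]
        positivity
      · have hnp : ‖n p‖ < ε / 2 := hKsub hp
        have h01 : 0 ≤ f p ∧ f p ≤ 1 := ⟨(hficc p).1, (hficc p).2⟩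
        have hsq : ‖(1 : ℂ) - (f p : ℂ) ^ 2‖ ≤ 1 := by
          have : ((1 : ℂ) - (f p : ℂ) ^ 2) = ((1 - f p ^ 2 : ℝ) : ℂ) := by push_cast; ring
          rw [this, Complex.norm_real]
          rw [Real.norm_eq_abs, abs_le]
          constructor
          · nlinarith [h01.1, h01.2]
          · nlinarith [h01.1, h01.2]
        calc ‖(1 : ℂ) - (f p : ℂ) ^ 2‖ * ‖n p‖ ≤ 1 * (ε / 2) := by
              apply mul_le_mul hsq hnp.le (norm_nonneg _) zero_le_one
          _ = ε / 2 := one_mul _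
    have hdist : dist n (d i * a * d j) ≤ ε / 2 := by
      rw [← ZeroAtInftyContinuousMap.dist_toBCF_eq_dist,
        BoundedContinuousFunction.dist_le hε2.le]
      intro p
      rw [dist_eq_norm]
      exact hbound p
    linarith [hdist]
  -- normalizing properties
  refine ⟨n, hnapp, hnA, ?_, ?_⟩
  · intro b hb p
    have key : (n * b * star n) p
        = Pproj i * (a p * (Pproj j * (b p * (Pproj j * star (a p))))) * Pproj i := by
      rw [ZeroAtInftyContinuousMap.mul_apply, ZeroAtInftyContinuousMap.mul_apply,
        ZeroAtInftyContinuousMap.star_apply, hnmul]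
      simp only [star_mul, star_Pproj, mul_assoc]
    rw [key]
    exact sandwich_mem_Dset i _
  · intro b hb p
    have key : (star n * b * n) p
        = Pproj j * (star (a p) * (Pproj i * (b p * (Pproj i * a p)))) * Pproj j := by
      rw [ZeroAtInftyContinuousMap.mul_apply, ZeroAtInftyContinuousMap.mul_apply,
        ZeroAtInftyContinuousMap.star_apply, hnmul]
      simp only [star_mul, star_Pproj, mul_assoc]
    rw [key]
    exact sandwich_mem_Dset j _


end
end

section
/- Let V be a locally compact Hausdorff space and H = ℓ²(ℤ, ℂ). For every finite subset F of C₀(V, K(H)) and every ε > 0 there exists u ∈ C₀(V, 𝒟) with u positive, ‖u‖ ≤ 1, and ‖u a − a‖ < ε and ‖a u − a‖ < ε for all a ∈ F. That is, C₀(V, 𝒟) contains an approximate unit of C₀(V, K(H)). -/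
set_option maxHeartbeats 1000000
set_option synthInstance.maxHeartbeats 400000

open scoped ZeroAtInfty

noncomputable section

variable (M : Type) [TopologicalSpace M]

section AuxProjection

local notation "⟪" x ", " y "⟫" => inner (𝕜 := ℂ) x y

/-- The finite-rank orthogonal projection onto the coordinates in `s`. -/
def P (s : Finset ℤ) : Op := ∑ i ∈ s, (innerSL ℂ (e i)).smulRight (e i)

lemma P_apply (s : Finset ℤ) (x : Hsp) : P s x = ∑ i ∈ s, lp.single 2 i (x i) := by
  simp only [P, ContinuousLinearMap.sum_apply, ContinuousLinearMap.smulRight_apply,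
    innerSL_apply_apply]
  refine Finset.sum_congr rfl fun i _ => ?_
  rw [show ⟪e i, x⟫ = x i by simp [e, lp.inner_single_left]]
  simp [e, ← lp.single_smul]

lemma P_coord (s : Finset ℤ) (x : Hsp) (j : ℤ) : (P s x) j = if j ∈ s then x j else 0 := by
  classical
  rw [P_apply, lp.coeFn_sum]
  simp only [Finset.sum_apply]
  by_cases h : j ∈ s
  · rw [Finset.sum_eq_single j]
    · simp [lp.single_apply, h]
    · intro i _ hij; simp [lp.single_apply, (Ne.symm hij : j ≠ i)]
    · intro hj; exact absurd h hj
  · rw [if_neg h, Finset.sum_eq_zero]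
    intro i hi
    have : j ≠ i := fun hji => h (hji ▸ hi)
    simp [lp.single_apply, this]

lemma inner_P_left (s : Finset ℤ) (x y : Hsp) :
    ⟪P s x, y⟫ = ∑ i ∈ s, (starRingEnd ℂ) (x i) * y i := by
  rw [P_apply, sum_inner]
  exact Finset.sum_congr rfl fun i _ => by rw [lp.inner_single_left, RCLike.inner_apply]; ring

lemma P_symm (s : Finset ℤ) (x y : Hsp) : ⟪P s x, y⟫ = ⟪x, P s y⟫ := by
  rw [inner_P_left, ← inner_conj_symm, inner_P_left, map_sum]
  refine Finset.sum_congr rfl fun i _ => ?_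
  simp [mul_comm]

lemma P_idem (s : Finset ℤ) (x : Hsp) : P s (P s x) = P s x := by
  apply lp.ext
  funext j
  rw [P_coord, P_coord]
  by_cases h : j ∈ s <;> simp [h, P_coord]

lemma re_inner_P_self_nonneg (s : Finset ℤ) (x : Hsp) : 0 ≤ (⟪P s x, x⟫).re := by
  rw [inner_P_left]
  rw [Complex.re_sum]
  refine Finset.sum_nonneg fun i _ => ?_
  rw [mul_comm, Complex.mul_conj]
  simp [Complex.normSq_nonneg]

lemma P_norm_apply_le (s : Finset ℤ) (x : Hsp) : ‖P s x‖ ≤ ‖x‖ := by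
  have h1 : (‖P s x‖ : ℝ) ^ 2 = (⟪P s x, P s x⟫).re := by
    have := norm_sq_eq_re_inner (𝕜 := ℂ) (P s x)
    exact this
  have h2 : ⟪P s x, P s x⟫ = ⟪P s x, x⟫ := by
    rw [← P_symm, P_idem]
  have h3 : (⟪P s x, x⟫).re ≤ ‖P s x‖ * ‖x‖ := by
    refine le_trans (Complex.re_le_norm _) ?_
    exact norm_inner_le_norm _ _
  by_cases h : ‖P s x‖ = 0
  · rw [h]; exact norm_nonneg x
  · have hpos : 0 < ‖P s x‖ := lt_of_le_of_ne (norm_nonneg _) (Ne.symm h)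
    have : ‖P s x‖ * ‖P s x‖ ≤ ‖P s x‖ * ‖x‖ := by
      rw [← pow_two, h1, h2]; exact h3
    exact le_of_mul_le_mul_left this hpos

lemma P_norm_le (s : Finset ℤ) : ‖P s‖ ≤ 1 :=
  ContinuousLinearMap.opNorm_le_bound _ zero_le_one fun x => by
    simpa using P_norm_apply_le s x

lemma P_e (s : Finset ℤ) (j : ℤ) : P s (e j) = if j ∈ s then e j else 0 := by
  apply lp.ext
  funext i
  rw [P_coord]
  classical
  by_cases h : j ∈ s <;> by_cases hij : i = j <;> simp [h, hij, e, lp.single_apply]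

lemma isCompactOperator_P (s : Finset ℤ) : IsCompactOperator (P s) := by
  classical
  set S : Submodule ℂ Hsp := Submodule.span ℂ (e '' ↑s) with hS
  haveI : FiniteDimensional ℂ S := FiniteDimensional.span_of_finite ℂ (s.finite_toSet.image e)
  have hmem : ∀ x : Hsp, P s x ∈ S := by
    intro x
    rw [P_apply]
    refine Submodule.sum_mem _ fun i hi => ?_
    have : lp.single 2 i (x i) = (x i : ℂ) • e i := by simp [e, ← lp.single_smul]
    rw [this]
    exact Submodule.smul_mem _ _ (Submodule.subset_span ⟨i, by simp [hi], rfl⟩)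
  refine ⟨Subtype.val '' Metric.closedBall (0 : S) 1, ?_, ?_⟩
  · exact (isCompact_closedBall _ _).image continuous_subtype_val
  · refine Filter.mem_of_superset (Metric.closedBall_mem_nhds 0 one_pos) ?_
    intro x hx
    refine ⟨⟨P s x, hmem x⟩, ?_, rfl⟩
    simp only [Metric.mem_closedBall, dist_zero_right] at hx ⊢
    exact le_trans (by exact_mod_cast P_norm_apply_le s x) hx

lemma opNorm_le_of_unit (f : Op) {C : ℝ} (hC : 0 ≤ C)
    (h : ∀ x : Hsp, ‖x‖ ≤ 1 → ‖f x‖ ≤ C) : ‖f‖ ≤ C := by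
  refine ContinuousLinearMap.opNorm_le_bound _ hC fun x => ?_
  rcases eq_or_ne x 0 with rfl | hx
  · simp
  · have hnx : 0 < ‖x‖ := norm_pos_iff.mpr hx
    have hy : ‖(‖x‖⁻¹ : ℂ) • x‖ ≤ 1 := by
      rw [norm_smul]
      simp [abs_of_pos hnx, inv_mul_cancel₀ hnx.ne']
    have := h _ hy
    rw [map_smul, norm_smul] at this
    have h2 : ‖(‖x‖⁻¹ : ℂ)‖ = ‖x‖⁻¹ := by
      simp [abs_of_pos hnx]
    rw [h2] at this
    calc ‖f x‖ = ‖x‖ * (‖x‖⁻¹ * ‖f x‖) := by field_simp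
    _ ≤ ‖x‖ * C := by gcongr
    _ = C * ‖x‖ := mul_comm _ _

lemma tail_P_comp (T : Op) (hT : IsCompactOperator (T : Hsp → Hsp)) {δ : ℝ} (hδ : 0 < δ) :
    ∃ s₀ : Finset ℤ, ∀ s : Finset ℤ, s₀ ⊆ s → ‖P s * T - T‖ ≤ δ := by
  classical
  obtain ⟨K, hKc, hKT⟩ := hT.image_closedBall_subset_compact 1
  have htb := hKc.totallyBounded
  rw [Metric.totallyBounded_iff] at htb
  obtain ⟨t, htfin, hcov⟩ := htb (δ/3) (by linarith)
  set t' := htfin.toFinset with ht'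
  have hchoice : ∀ y ∈ t', ∃ s₀ : Finset ℤ, ∀ s : Finset ℤ, s₀ ⊆ s →
      ‖P s y - y‖ < δ/3 := by
    intro y _
    have hsum : HasSum (fun i : ℤ => lp.single 2 i (y i)) y := lp.hasSum_single (by norm_num) y
    have hev := Metric.tendsto_nhds.mp hsum (δ/3) (by linarith)
    rw [SummationFilter.unconditional_filter, Filter.eventually_atTop] at hev
    obtain ⟨s₀, hs₀⟩ := hev
    refine ⟨s₀, fun s hs => ?_⟩
    rw [P_apply, ← dist_eq_norm]
    exact hs₀ s hs
  choose g hg using hchoice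
  refine ⟨t'.attach.sup (fun y => g y.1 y.2), fun s hs => ?_⟩
  refine opNorm_le_of_unit _ hδ.le fun x hx => ?_
  have hTx : T x ∈ K := hKT ⟨x, by simpa [Metric.mem_closedBall] using hx, rfl⟩
  obtain ⟨y, hyt, hy⟩ := Set.mem_iUnion₂.mp (hcov hTx)
  have hyt' : y ∈ t' := htfin.mem_toFinset.mpr hyt
  have hgy : g y hyt' ⊆ s := le_trans (Finset.le_sup (f := fun y => g y.1 y.2) (Finset.mem_attach _ ⟨y, hyt'⟩)) hs
  have h1 : ‖P s y - y‖ < δ/3 := hg y hyt' s hgy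
  have h2 : ‖T x - y‖ < δ/3 := by
    rw [← dist_eq_norm]; exact Metric.mem_ball.mp hy
  have : (P s * T - T) x = P s (T x - y) + (P s y - y) + (y - T x) := by
    simp only [ContinuousLinearMap.sub_apply, ContinuousLinearMap.mul_apply, map_sub]
    abel
  rw [this]
  calc ‖P s (T x - y) + (P s y - y) + (y - T x)‖
      ≤ ‖P s (T x - y)‖ + ‖P s y - y‖ + ‖y - T x‖ := norm_add₃_le
    _ ≤ ‖T x - y‖ + ‖P s y - y‖ + ‖y - T x‖ := by gcongr; exact P_norm_apply_le s _
    _ ≤ δ := by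
        have h3 : ‖y - T x‖ < δ/3 := by rw [norm_sub_rev]; exact h2
        linarith

lemma uniform_P_comp (C : Set Op) (hC : IsCompact C)
    (hcomp : ∀ T ∈ C, IsCompactOperator (T : Hsp → Hsp)) {δ : ℝ} (hδ : 0 < δ) :
    ∃ s₀ : Finset ℤ, ∀ s : Finset ℤ, s₀ ⊆ s → ∀ T ∈ C, ‖P s * T - T‖ ≤ δ := by
  classical
  have htb := hC.totallyBounded
  rw [totallyBounded_iff_subset] at htb
  obtain ⟨t, hts, htfin, hcov⟩ :=
    htb _ (Metric.dist_mem_uniformity (show (0:ℝ) < δ/3 by linarith))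
  set t' := htfin.toFinset with ht'
  have hchoice : ∀ T ∈ t', ∃ s₀ : Finset ℤ, ∀ s : Finset ℤ, s₀ ⊆ s →
      ‖P s * T - T‖ ≤ δ/3 := fun T hT =>
    tail_P_comp T (hcomp T (hts (htfin.mem_toFinset.mp hT))) (by linarith)
  choose g hg using hchoice
  refine ⟨t'.attach.sup (fun T => g T.1 T.2), fun s hs T hT => ?_⟩
  obtain ⟨T', hT't, hT'⟩ := Set.mem_iUnion₂.mp (hcov hT)
  have hT't' : T' ∈ t' := htfin.mem_toFinset.mpr hT't
  have hd : dist T T' < δ/3 := hT'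
  have h1 : ‖P s * T' - T'‖ ≤ δ/3 :=
    hg T' hT't' s (le_trans (Finset.le_sup (f := fun T => g T.1 T.2) (Finset.mem_attach _ ⟨T', hT't'⟩)) hs)
  have key : P s * T - T = P s * (T - T') + (P s * T' - T') + (T' - T) := by
    rw [mul_sub]; abel
  rw [key]
  have hPs : ‖P s * (T - T')‖ ≤ ‖T - T'‖ := by
    calc ‖P s * (T - T')‖ ≤ ‖P s‖ * ‖T - T'‖ := norm_mul_le _ _
    _ ≤ 1 * ‖T - T'‖ := by gcongr; exact P_norm_le s
    _ = ‖T - T'‖ := one_mul _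
  have hTT' : ‖T - T'‖ < δ/3 := by rw [← dist_eq_norm]; exact hd
  have hT'T : ‖T' - T‖ < δ/3 := by rw [norm_sub_rev]; exact hTT'
  calc ‖P s * (T - T') + (P s * T' - T') + (T' - T)‖
      ≤ ‖P s * (T - T')‖ + ‖P s * T' - T'‖ + ‖T' - T‖ := norm_add₃_le
    _ ≤ δ := by linarith

lemma right_bound (T : Op) (s : Finset ℤ) :
    ‖T * P s - T‖ ≤ Real.sqrt (2 * ‖P s * (ContinuousLinearMap.adjoint T * T)
      - ContinuousLinearMap.adjoint T * T‖) := by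
  set A : Op := ContinuousLinearMap.adjoint T * T with hA
  set D : ℝ := ‖P s * A - A‖ with hD
  have hD0 : 0 ≤ D := norm_nonneg _
  refine opNorm_le_of_unit _ (Real.sqrt_nonneg _) fun x hx => ?_
  set q : Hsp := x - P s x with hq
  have happ : (T * P s - T) x = -(T q) := by
    simp only [hq, ContinuousLinearMap.sub_apply, ContinuousLinearMap.mul_apply, map_sub]
    abel
  rw [happ, norm_neg]
  have hsq : (‖T q‖ : ℝ) ^ 2 = (⟪T q, T q⟫).re := norm_sq_eq_re_inner (𝕜 := ℂ) (T q)
  have h1 : ⟪T q, T q⟫ = ⟪A q, q⟫ := by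
    rw [hA]
    rw [ContinuousLinearMap.mul_apply]
    exact (ContinuousLinearMap.adjoint_inner_left T q (T q)).symm
  have h2 : ⟪A q, q⟫ = ⟪A q - P s (A q), x⟫ := by
    rw [inner_sub_left, hq, inner_sub_right, P_symm]
  have h3 : ‖A q - P s (A q)‖ ≤ D * ‖q‖ := by
    have : A q - P s (A q) = -((P s * A - A) q) := by
      simp only [ContinuousLinearMap.sub_apply, ContinuousLinearMap.mul_apply]
      abel
    rw [this, norm_neg]
    exact ContinuousLinearMap.le_opNorm _ _
  have hq2 : ‖q‖ ≤ 2 * ‖x‖ := by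
    calc ‖q‖ ≤ ‖x‖ + ‖P s x‖ := norm_sub_le _ _
    _ ≤ ‖x‖ + ‖x‖ := by gcongr; exact P_norm_apply_le s x
    _ = 2 * ‖x‖ := by ring
  have hfin : (‖T q‖ : ℝ) ^ 2 ≤ 2 * D := by
    rw [hsq, h1, h2]
    calc (⟪A q - P s (A q), x⟫).re ≤ ‖⟪A q - P s (A q), x⟫‖ := Complex.re_le_norm _
    _ ≤ ‖A q - P s (A q)‖ * ‖x‖ := norm_inner_le_norm _ _
    _ ≤ (D * (2 * ‖x‖)) * ‖x‖ := by gcongr; exact le_trans h3 (by gcongr)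
    _ = 2 * D * (‖x‖ * ‖x‖) := by ring
    _ ≤ 2 * D * 1 := by
        have : ‖x‖ * ‖x‖ ≤ 1 := by nlinarith [norm_nonneg x]
        nlinarith
    _ = 2 * D := mul_one _
  calc ‖T q‖ = Real.sqrt (‖T q‖ ^ 2) := (Real.sqrt_sq (norm_nonneg _)).symm
  _ ≤ Real.sqrt (2 * D) := Real.sqrt_le_sqrt hfin

lemma smul_P_isPositive (s : Finset ℤ) (c : ℝ) (hc : 0 ≤ c) :
    ((c : ℂ) • P s).IsPositive := by
  constructor
  · intro x y
    simp only [ContinuousLinearMap.coe_coe, ContinuousLinearMap.smul_apply,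
      inner_smul_left, inner_smul_right, Complex.conj_ofReal]
    rw [P_symm]
  · intro x
    rw [ContinuousLinearMap.reApplyInnerSelf_apply]
    simp only [ContinuousLinearMap.smul_apply, inner_smul_left, Complex.conj_ofReal]
    have : (((c:ℂ) * ⟪P s x, x⟫)).re = c * (⟪P s x, x⟫).re := by
      simp [Complex.mul_re]
    rw [RCLike.re_to_complex, this]
    exact mul_nonneg hc (re_inner_P_self_nonneg s x)

lemma C0_norm_le {V : Type} [TopologicalSpace V] (f : C₀(V, Op)) {c : ℝ} (hc : 0 ≤ c)
    (h : ∀ p : V, ‖f p‖ ≤ c) : ‖f‖ ≤ c := by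
  rw [← ZeroAtInftyContinuousMap.norm_toBCF_eq_norm]
  exact (BoundedContinuousFunction.norm_le hc).mpr h

end AuxProjection

/-- Let `V` be a locally compact Hausdorff space, `H = ℓ²(ℤ, ℂ)`. For every
finite subset `F` of `C₀(V, K(H))` and every `ε > 0` there is a positive `u ∈ C₀(V, 𝒟)` of
norm at most `1` with `‖u a − a‖ < ε` and `‖a u − a‖ < ε` for all `a ∈ F`; that is,
`C₀(V, 𝒟)` contains an approximate unit of `C₀(V, K(H))`. -/
theorem cd_contains_approximate_unit
    (V : Type) [TopologicalSpace V] [LocallyCompactSpace V] [T2Space V]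
    (F : Finset C₀(V, Op)) (hF : ↑F ⊆ CK V) (ε : ℝ) (hε : 0 < ε) :
    ∃ u ∈ CD V, IsPos V u ∧ ‖u‖ ≤ 1 ∧ ∀ a ∈ F, ‖u * a - a‖ < ε ∧ ‖a * u - a‖ < ε := by
  classical
  -- a compact set outside of which all elements of `F` are small
  obtain ⟨K, hKcomp, hK⟩ : ∃ K : Set V, IsCompact K ∧ ∀ p ∉ K, ∀ a ∈ F, ‖a p‖ < ε/4 := by
    have hev : ∀ᶠ p in Filter.cocompact V, ∀ a ∈ F, ‖a p‖ < ε/4 := by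
      rw [Filter.eventually_all_finset]
      intro a _
      have := Metric.tendsto_nhds.mp a.zero_at_infty' (ε/4) (by linarith)
      simpa [dist_zero_right] using this
    obtain ⟨K, hKc, hsub⟩ := Filter.mem_cocompact.mp hev
    exact ⟨K, hKc, fun p hp => hsub hp⟩
  -- the compact set of operator values over `K`
  set C : Set Op := ⋃ a ∈ (F : Set C₀(V, Op)), (⇑a '' K) with hCdef
  have hCcompact : IsCompact C :=
    F.finite_toSet.isCompact_biUnion (fun a _ => hKcomp.image a.continuous)
  have hCops : ∀ T ∈ C, IsCompactOperator (T : Hsp → Hsp) := by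
    intro T hT
    obtain ⟨a, haF, p, _, rfl⟩ : ∃ a ∈ (F : Set C₀(V, Op)), ∃ p ∈ K, a p = T := by
      simpa [hCdef] using hT
    exact hF haF p
  set C' : Set Op := (fun T : Op => ContinuousLinearMap.adjoint T * T) '' C with hC'def
  have hC'compact : IsCompact C' :=
    hCcompact.image
      (((ContinuousLinearMap.adjoint (𝕜 := ℂ) (E := Hsp) (F := Hsp)).continuous).mul
        continuous_id)
  have hC'ops : ∀ B ∈ C', IsCompactOperator (B : Hsp → Hsp) := by
    rintro B ⟨T, hT, rfl⟩
    rw [show ⇑(ContinuousLinearMap.adjoint T * T) =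
        ⇑(ContinuousLinearMap.adjoint T) ∘ ⇑T from rfl]
    exact (hCops T hT).continuous_comp (ContinuousLinearMap.adjoint T).continuous
  obtain ⟨s₁, hs₁⟩ := uniform_P_comp C hCcompact hCops (δ := ε/4) (by linarith)
  obtain ⟨s₂, hs₂⟩ := uniform_P_comp C' hC'compact hC'ops (δ := ε^2/32) (by positivity)
  set s : Finset ℤ := s₁ ∪ s₂ with hsdef
  have hb1 : ∀ T ∈ C, ‖P s * T - T‖ ≤ ε/4 := hs₁ s Finset.subset_union_left
  have hb2 : ∀ T ∈ C, ‖T * P s - T‖ ≤ ε/4 := by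
    intro T hT
    refine le_trans (right_bound T s) ?_
    have hB : ‖P s * (ContinuousLinearMap.adjoint T * T)
        - ContinuousLinearMap.adjoint T * T‖ ≤ ε^2/32 :=
      hs₂ s Finset.subset_union_right _ ⟨T, hT, rfl⟩
    calc Real.sqrt (2 * ‖P s * (ContinuousLinearMap.adjoint T * T)
          - ContinuousLinearMap.adjoint T * T‖)
        ≤ Real.sqrt ((ε/4)^2) := Real.sqrt_le_sqrt (by nlinarith)
      _ = ε/4 := Real.sqrt_sq (by linarith)
  -- Urysohn bump function
  obtain ⟨φ, hφ1, -, hφsupp, hφIcc⟩ :=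
    exists_continuous_one_zero_of_isCompact hKcomp isClosed_empty (Set.disjoint_empty K)
  -- the candidate approximate unit
  have hcont : Continuous fun p : V => (φ p : ℂ) • P s :=
    (Complex.continuous_ofReal.comp φ.continuous).smul continuous_const
  have hzai : Filter.Tendsto (fun p : V => (φ p : ℂ) • P s) (Filter.cocompact V) (nhds 0) := by
    have hev : (fun p : V => (φ p : ℂ) • P s) =ᶠ[Filter.cocompact V] (fun _ => 0) := by
      refine Filter.eventually_iff.mpr (Filter.mem_cocompact.mpr ⟨tsupport φ, hφsupp, ?_⟩)
      intro p hp
      have : φ p = 0 := image_eq_zero_of_notMem_tsupport hp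
      show (φ p : ℂ) • P s = 0
      rw [this, Complex.ofReal_zero]; exact zero_smul ℂ (P s)
    exact tendsto_const_nhds.congr' hev.symm
  set u : C₀(V, Op) := ⟨⟨fun p : V => (φ p : ℂ) • P s, hcont⟩, hzai⟩ with hu
  have hup : ∀ p : V, u p = (φ p : ℂ) • P s := fun p => rfl
  have hφ01 : ∀ p : V, 0 ≤ φ p ∧ φ p ≤ 1 := fun p => ⟨(hφIcc p).1, (hφIcc p).2⟩
  refine ⟨u, ?_, ?_, ?_, ?_⟩
  · -- u ∈ CD V
    intro p
    constructor
    · rw [hup, show ⇑((φ p : ℂ) • P s) = (φ p : ℂ) • ⇑(P s) from rfl]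
      exact (isCompactOperator_P s).smul _
    · intro i
      refine ⟨if i ∈ s then (φ p : ℂ) else 0, ?_⟩
      rw [hup]
      rw [ContinuousLinearMap.smul_apply, P_e]
      by_cases h : i ∈ s <;> simp [h]
  · -- positive
    intro p
    rw [hup]
    exact smul_P_isPositive s (φ p) (hφ01 p).1
  · -- norm ≤ 1
    refine C0_norm_le u zero_le_one fun p => ?_
    have hns : ‖((φ p : ℝ) : ℂ) • P s‖ = ‖((φ p : ℝ) : ℂ)‖ * ‖P s‖ := by exact norm_smul (α := ℂ) (β := Op) _ _
    rw [hup, hns]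
    have h1 : ‖((φ p : ℝ) : ℂ)‖ ≤ 1 := by
      simp only [Complex.norm_real, Real.norm_eq_abs]
      rw [abs_of_nonneg (hφ01 p).1]
      exact (hφ01 p).2
    calc ‖((φ p : ℝ) : ℂ)‖ * ‖P s‖ ≤ 1 * 1 :=
          mul_le_mul h1 (P_norm_le s) (norm_nonneg _) zero_le_one
      _ = 1 := mul_one 1
  · -- approximation
    intro a haF
    have haFs : a ∈ (F : Set C₀(V, Op)) := haF
    have hbound : ∀ p : V, ‖(u * a - a) p‖ ≤ ε/2 ∧ ‖(a * u - a) p‖ ≤ ε/2 := by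
      intro p
      have hcoe1 : (u * a - a) p = u p * a p - a p := by simp
      have hcoe2 : (a * u - a) p = a p * u p - a p := by simp
      set A : Op := a p with hA
      set t : ℝ := φ p with ht
      have ht0 : 0 ≤ t := (hφ01 p).1
      have ht1 : t ≤ 1 := (hφ01 p).2
      have hid1 : u p * A - A = (t:ℂ) • (P s * A - A) + ((t:ℂ) - 1) • A := by
        rw [hup p, smul_mul_assoc, smul_sub, sub_smul, one_smul]
        abel
      have hid2 : A * u p - A = (t:ℂ) • (A * P s - A) + ((t:ℂ) - 1) • A := by
        rw [hup p, mul_smul_comm, smul_sub, sub_smul, one_smul]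
        abel
      have hnt : ‖(t:ℂ)‖ = t := by
        simp [abs_of_nonneg ht0]
      have hnt1 : ‖(t:ℂ) - 1‖ = 1 - t := by
        rw [show ((t:ℝ):ℂ) - 1 = (((t - 1 : ℝ)):ℂ) by push_cast; ring]
        simp only [Complex.norm_real, Real.norm_eq_abs]
        rw [abs_of_nonpos (by linarith)]
        ring
      by_cases hp : p ∈ K
      · -- on K : t = 1, use the operator estimates
        have htone : t = 1 := hφ1 hp
        have hAC : A ∈ C := Set.mem_biUnion haFs ⟨p, hp, rfl⟩
        constructor
        · rw [hcoe1, hid1, htone]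
          simp only [Complex.ofReal_one, one_smul, sub_self, zero_smul, add_zero]
          exact le_trans (hb1 A hAC) (by linarith)
        · rw [hcoe2, hid2, htone]
          simp only [Complex.ofReal_one, one_smul, sub_self, zero_smul, add_zero]
          exact le_trans (hb2 A hAC) (by linarith)
      · -- off K : ‖A‖ is small
        have hAsmall : ‖A‖ < ε/4 := hK p hp a haF
        have hPA : ‖P s * A - A‖ ≤ 2 * ‖A‖ := by
          calc ‖P s * A - A‖ ≤ ‖P s * A‖ + ‖A‖ := norm_sub_le _ _
          _ ≤ ‖P s‖ * ‖A‖ + ‖A‖ := by gcongr; exact norm_mul_le _ _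
          _ ≤ 1 * ‖A‖ + ‖A‖ := by gcongr; exact P_norm_le s
          _ = 2 * ‖A‖ := by ring
        have hAP : ‖A * P s - A‖ ≤ 2 * ‖A‖ := by
          calc ‖A * P s - A‖ ≤ ‖A * P s‖ + ‖A‖ := norm_sub_le _ _
          _ ≤ ‖A‖ * ‖P s‖ + ‖A‖ := by gcongr; exact norm_mul_le _ _
          _ ≤ ‖A‖ * 1 + ‖A‖ := by gcongr; exact P_norm_le s
          _ = 2 * ‖A‖ := by ring
        have hgen : ∀ B : Op, ‖B‖ ≤ 2 * ‖A‖ →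
            ‖(t:ℂ) • B + ((t:ℂ) - 1) • A‖ ≤ ε/2 := by
          intro B hB
          calc ‖(t:ℂ) • B + ((t:ℂ) - 1) • A‖
              ≤ ‖(t:ℂ) • B‖ + ‖((t:ℂ) - 1) • A‖ := norm_add_le _ _
            _ = t * ‖B‖ + (1 - t) * ‖A‖ := by
                have e1 : ‖(t:ℂ) • B‖ = ‖(t:ℂ)‖ * ‖B‖ := by exact norm_smul (α := ℂ) (β := Op) _ _
                have e2 : ‖((t:ℂ) - 1) • A‖ = ‖(t:ℂ) - 1‖ * ‖A‖ := by exact norm_smul (α := ℂ) (β := Op) _ _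
                rw [e1, e2, hnt, hnt1]
            _ ≤ t * (2 * ‖A‖) + (1 - t) * ‖A‖ := by
                have h0 : 0 ≤ 1 - t := by linarith
                have hBA : ‖B‖ ≤ 2 * ‖A‖ := hB
                nlinarith [norm_nonneg A, norm_nonneg B]
            _ ≤ 2 * ‖A‖ := by nlinarith [norm_nonneg A]
            _ ≤ ε/2 := by linarith
        exact ⟨by rw [hcoe1, hid1]; exact hgen _ hPA, by rw [hcoe2, hid2]; exact hgen _ hAP⟩
    constructor
    · refine lt_of_le_of_lt (C0_norm_le _ (by linarith) fun p => (hbound p).1) ?_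
      linarith
    · refine lt_of_le_of_lt (C0_norm_le _ (by linarith) fun p => (hbound p).2) ?_
      linarith



end
end

section
/- Let A be a C*-algebra, B ⊆ A a closed subalgebra, and I ⊆ A a closed two-sided ideal. Assume that I ∩ B contains an approximate unit of I, in the sense that for every x ∈ I and every ε > 0 there exists h ∈ I ∩ B with h positive, ‖h‖ ≤ 1, and ‖h x − x‖ < ε and ‖x h − x‖ < ε. Then for every n ∈ I satisfying n (I ∩ B) n* ⊆ I ∩ B and n* (I ∩ B) n ⊆ I ∩ B, and for every b ∈ B, one has n b n* ∈ I ∩ B and n* b n ∈ I ∩ B. In particular, the normalizer N_I(I ∩ B) is contained in the normalizer N_A(B). -/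
set_option maxHeartbeats 1000000
set_option synthInstance.maxHeartbeats 400000

/-- Auxiliary norm estimate: if `h` almost acts as a unit on `n` (from the right) and on `m`
(from the left), then `n * (h * b * h) * m` is close to `n * b * m`. -/
lemma normalizer_aux_err_bound {A : Type*} [NonUnitalNormedRing A]
    (n b h m : A) (δ : ℝ) (hh1 : ‖h‖ ≤ 1)
    (h1 : ‖n - n * h‖ < δ) (h2 : ‖m - h * m‖ < δ) :
    ‖n * b * m - n * (h * b * h) * m‖ ≤ δ * (‖b‖ * ‖m‖) + (‖n‖ * ‖b‖) * δ := by
  have e1 : n * b * m - n * (h * b * h) * m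
      = (n - n * h) * (b * m) + (n * h * b) * (m - h * m) := by noncomm_ring
  have t1 : ‖(n - n * h) * (b * m)‖ ≤ δ * (‖b‖ * ‖m‖) := by
    calc ‖(n - n * h) * (b * m)‖ ≤ ‖n - n * h‖ * ‖b * m‖ := norm_mul_le _ _
      _ ≤ δ * (‖b‖ * ‖m‖) := by
          apply mul_le_mul (le_of_lt h1) (norm_mul_le _ _) (norm_nonneg _)
          exact le_of_lt (lt_of_le_of_lt (norm_nonneg _) h1)
  have t2 : ‖(n * h * b) * (m - h * m)‖ ≤ (‖n‖ * ‖b‖) * δ := by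
    calc ‖(n * h * b) * (m - h * m)‖ ≤ ‖n * h * b‖ * ‖m - h * m‖ := norm_mul_le _ _
      _ ≤ (‖n‖ * ‖b‖) * δ := by
          apply mul_le_mul _ (le_of_lt h2) (norm_nonneg _) (by positivity)
          calc ‖n * h * b‖ ≤ ‖n * h‖ * ‖b‖ := norm_mul_le _ _
            _ ≤ (‖n‖ * 1) * ‖b‖ := by
                gcongr
                calc ‖n * h‖ ≤ ‖n‖ * ‖h‖ := norm_mul_le _ _
                  _ ≤ ‖n‖ * 1 := by gcongr
            _ = ‖n‖ * ‖b‖ := by ring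
  calc ‖n * b * m - n * (h * b * h) * m‖
      = ‖(n - n * h) * (b * m) + (n * h * b) * (m - h * m)‖ := by rw [e1]
    _ ≤ ‖(n - n * h) * (b * m)‖ + ‖(n * h * b) * (m - h * m)‖ := norm_add_le _ _
    _ ≤ δ * (‖b‖ * ‖m‖) + (‖n‖ * ‖b‖) * δ := add_le_add t1 t2

/-- Let `A` be a C*-algebra, `B ⊆ A` a closed subalgebra, and `I ⊆ A` a closed
two-sided ideal. If `I ∩ B` contains an approximate unit of `I` (with the approximating elements
positive and of norm at most 1), then every `n ∈ I` normalizing `I ∩ B` satisfies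
`n b n* ∈ I ∩ B` and `n* b n ∈ I ∩ B` for every `b ∈ B`; in particular
`N_I(I ∩ B) ⊆ N_A(B)`. -/
theorem normalizer_ideal_subset_normalizer
    {A : Type*} [NonUnitalCStarAlgebra A]
    (B : Set A)
    (hBclosed : IsClosed B)
    (hB0 : (0 : A) ∈ B)
    (hBadd : ∀ x ∈ B, ∀ y ∈ B, x + y ∈ B)
    (hBsmul : ∀ (c : ℂ), ∀ x ∈ B, c • x ∈ B)
    (hBmul : ∀ x ∈ B, ∀ y ∈ B, x * y ∈ B)
    (I : Set A)
    (hIclosed : IsClosed I)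
    (hI0 : (0 : A) ∈ I)
    (hIadd : ∀ x ∈ I, ∀ y ∈ I, x + y ∈ I)
    (hIneg : ∀ x ∈ I, -x ∈ I)
    (hIleft : ∀ x ∈ I, ∀ a : A, a * x ∈ I)
    (hIright : ∀ x ∈ I, ∀ a : A, x * a ∈ I)
    -- `I ∩ B` contains an approximate unit of `I`
    (happrox : ∀ x ∈ I, ∀ ε : ℝ, 0 < ε → ∃ h ∈ I ∩ B,
      (∃ v : A, h = star v * v) ∧ ‖h‖ ≤ 1 ∧ ‖h * x - x‖ < ε ∧ ‖x * h - x‖ < ε) :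
    ∀ n ∈ I, (∀ b ∈ I ∩ B, n * b * star n ∈ I ∩ B) → (∀ b ∈ I ∩ B, star n * b * n ∈ I ∩ B) →
      ∀ b ∈ B, n * b * star n ∈ I ∩ B ∧ star n * b * n ∈ I ∩ B := by
  intro n hnI hn1 hn2 b hb
  have hS : IsClosed (I ∩ B) := hIclosed.inter hBclosed
  have key : ∀ ε : ℝ, 0 < ε → (∃ y ∈ I ∩ B, ‖n * b * star n - y‖ < ε) ∧
      (∃ z ∈ I ∩ B, ‖star n * b * n - z‖ < ε) := by
    intro ε hε
    have hden : (0:ℝ) < 2 * ‖b‖ * ‖n‖ + 1 := by positivity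
    set δ := ε / (2 * ‖b‖ * ‖n‖ + 1) with hδdef
    have hδ : 0 < δ := div_pos hε hden
    obtain ⟨h, hhIB, ⟨v, hv⟩, hh1, hhn, hnh⟩ := happrox n hnI δ hδ
    have hstar : star h = h := by rw [hv]; simp [star_mul]
    have hmem : h * b * h ∈ I ∩ B :=
      ⟨hIright _ (hIright h hhIB.1 b) h, hBmul _ (hBmul h hhIB.2 b hb) h hhIB.2⟩
    have hy : n * (h * b * h) * star n ∈ I ∩ B := hn1 _ hmem
    have hz : star n * (h * b * h) * n ∈ I ∩ B := hn2 _ hmem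
    have hnh' : ‖n - n * h‖ < δ := by rw [norm_sub_rev]; exact hnh
    have hhn' : ‖n - h * n‖ < δ := by rw [norm_sub_rev]; exact hhn
    have hnn : ‖star n - h * star n‖ < δ := by
      have e : star n - h * star n = star (n - n * h) := by
        rw [star_sub, star_mul, hstar]
      rw [e, norm_star]; exact hnh'
    have hnn2 : ‖star n - star n * h‖ < δ := by
      have e : star n - star n * h = star (n - h * n) := by
        rw [star_sub, star_mul, hstar]
      rw [e, norm_star]; exact hhn'
    have hδε : δ * (‖b‖ * ‖n‖) + (‖n‖ * ‖b‖) * δ < ε := by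
      have he : δ * (2 * ‖b‖ * ‖n‖ + 1) = ε := div_mul_cancel₀ ε (ne_of_gt hden)
      nlinarith
    constructor
    · refine ⟨n * (h * b * h) * star n, hy, ?_⟩
      have := normalizer_aux_err_bound n b h (star n) δ hh1 hnh' hnn
      rw [norm_star] at this
      exact lt_of_le_of_lt this hδε
    · refine ⟨star n * (h * b * h) * n, hz, ?_⟩
      have := normalizer_aux_err_bound (star n) b h n δ hh1 hnn2 hhn'
      rw [norm_star] at this
      exact lt_of_le_of_lt this hδε
  constructor
  · rw [← hS.closure_eq]
    rw [Metric.mem_closure_iff]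
    intro ε hε
    obtain ⟨y, hy, hylt⟩ := (key ε hε).1
    exact ⟨y, hy, by rwa [dist_eq_norm]⟩
  · rw [← hS.closure_eq]
    rw [Metric.mem_closure_iff]
    intro ε hε
    obtain ⟨z, hz, hzlt⟩ := (key ε hε).2
    exact ⟨z, hz, by rwa [dist_eq_norm]⟩
end
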